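/- Let f : (C^n,0) → (C^p,0) be a finite map germ of rank r of the form f(s,x) = (s, f_s(x)), s ∈ C^r, x ∈ C^{n-r}. Then the projection C^{nk} → C^r × C^{k(n-r)} forgetting the variables s^{(2)},…,s^{(k)} restricts to a bijection from the closure of the strict k-multiple points of f onto the closure of the set {(s,w) : w is a strict k-multiple point of f_s}. -/
import Mathlib


/-- Let `f(s,x) = (s, f_s(x))`, `s ∈ ℂʳ`, `x ∈ ℂᵐ`, be a finite holomorphic map (of
rank `r`). Then the projection forgetting the parameters `s⁽²⁾,…,s⁽ᵏ⁾` restricts to a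
bijection from the closure of the strict `k`-multiple points of `f` onto the closure of
the set `{(s,w) : w is a strict k-multiple point of f_s}`. -/
theorem projection_bijOn_strict_multiple_points (r m q k : ℕ) (hk : 2 ≤ k)
    (g : (Fin r → ℂ) → (Fin m → ℂ) → (Fin q → ℂ))
    (f : (Fin r → ℂ) × (Fin m → ℂ) → (Fin r → ℂ) × (Fin q → ℂ))
    (hfg : ∀ s x, f (s, x) = (s, g s x))
    (hfa : ∀ z, AnalyticAt ℂ f z)
    (hfin : ∀ y, (f ⁻¹' {y}).Finite) :
    Set.BijOn
      (fun w : Fin k → (Fin r → ℂ) × (Fin m → ℂ) => ((w ⟨0, by omega⟩).1, fun l => (w l).2))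
      (closure {w : Fin k → (Fin r → ℂ) × (Fin m → ℂ) |
        Function.Injective w ∧ ∀ l l', f (w l) = f (w l')})
      (closure {z : (Fin r → ℂ) × (Fin k → Fin m → ℂ) |
        Function.Injective z.2 ∧ ∀ l l', g z.1 (z.2 l) = g z.1 (z.2 l')}) := by
  set i0 : Fin k := ⟨0, by omega⟩
  set π : (Fin k → (Fin r → ℂ) × (Fin m → ℂ)) → (Fin r → ℂ) × (Fin k → Fin m → ℂ) :=
    fun w => ((w i0).1, fun l => (w l).2) with hπ
  set Φ : (Fin r → ℂ) × (Fin k → Fin m → ℂ) → (Fin k → (Fin r → ℂ) × (Fin m → ℂ)) :=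
    fun z => fun l => (z.1, z.2 l) with hΦ
  set A : Set (Fin k → (Fin r → ℂ) × (Fin m → ℂ)) :=
    {w | Function.Injective w ∧ ∀ l l', f (w l) = f (w l')} with hA
  set B : Set ((Fin r → ℂ) × (Fin k → Fin m → ℂ)) :=
    {z | Function.Injective z.2 ∧ ∀ l l', g z.1 (z.2 l) = g z.1 (z.2 l')} with hB
  -- first components coincide on A
  have hfst : ∀ w ∈ A, ∀ l : Fin k, (w l).1 = (w i0).1 := by
    intro w hw l
    have h := hw.2 l i0
    have h1 : f (w l) = ((w l).1, g (w l).1 (w l).2) := by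
      rw [← hfg]
    have h2 : f (w i0) = ((w i0).1, g (w i0).1 (w i0).2) := by
      rw [← hfg]
    rw [h1, h2] at h
    exact (Prod.ext_iff.mp h).1
  set C : Set (Fin k → (Fin r → ℂ) × (Fin m → ℂ)) :=
    {w | ∀ l : Fin k, (w l).1 = (w i0).1} with hC
  have hCclosed : IsClosed C := by
    have : C = ⋂ l : Fin k, {w : Fin k → (Fin r → ℂ) × (Fin m → ℂ) | (w l).1 = (w i0).1} := by
      ext w; simp [hC]
    rw [this]
    exact isClosed_iInter fun l =>
      isClosed_eq (by fun_prop) (by fun_prop)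
  have hAC : A ⊆ C := fun w hw => hfst w hw
  have hclAC : closure A ⊆ C := closure_minimal hAC hCclosed
  -- Φ ∘ π = id on C
  have hΦπ : ∀ w ∈ C, Φ (π w) = w := by
    intro w hw
    funext l
    have := hw l
    simp only [hΦ, hπ]
    exact Prod.ext this.symm rfl
  -- π ∘ Φ = id
  have hπΦ : ∀ z, π (Φ z) = z := by
    intro z
    simp [hπ, hΦ]
  have hπcont : Continuous π := by fun_prop
  have hΦcont : Continuous Φ := by fun_prop
  have hmapsAB : Set.MapsTo π A B := by
    intro w hw
    constructor
    · intro l l' h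
      apply hw.1
      have h1 : (w l).1 = (w l').1 := by rw [hfst w hw l, hfst w hw l']
      exact Prod.ext h1 h
    · intro l l'
      have h := hw.2 l l'
      have h1 : f (w l) = ((w l).1, g (w l).1 (w l).2) := by rw [← hfg]
      have h2 : f (w l') = ((w l').1, g (w l').1 (w l').2) := by rw [← hfg]
      rw [h1, h2] at h
      have hg2 : g (w l).1 (w l).2 = g (w l').1 (w l').2 := (Prod.ext_iff.mp h).2
      show g (w i0).1 (w l).2 = g (w i0).1 (w l').2
      have hs : (w l).1 = (w l').1 := (Prod.ext_iff.mp h).1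
      rw [← hfst w hw l]
      nth_rewrite 2 [hs]
      exact hg2
  have hmapsBA : Set.MapsTo Φ B A := by
    intro z hz
    constructor
    · intro l l' h
      apply hz.1
      exact congrArg Prod.snd h
    · intro l l'
      simp only [hΦ]
      rw [hfg, hfg, hz.2 l l']
  constructor
  · -- MapsTo
    intro w hw
    exact map_mem_closure hπcont hw hmapsAB
  constructor
  · -- InjOn
    intro w hw w' hw' h
    have := hΦπ w (hclAC hw)
    rw [← this, ← hΦπ w' (hclAC hw')]
    show Φ (π w) = Φ (π w')
    rw [h]
  · -- SurjOn
    intro z hz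
    refine ⟨Φ z, map_mem_closure hΦcont hz hmapsBA, hπΦ z⟩
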